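/- Let k be a field of characteristic p > 2, let λ, μ ∈ k, let G = ℤ/nℤ with p | n and generator g, and let H be the quotient of T(V) # kG (with a·g = a, b·g = a+b, a and b (g,1)-skew-primitive) by the ideal Ĩ generated by a^p - λ(1 - g^p), b^p - μ(1 - g^p), and ba - ab - (1/2)a². Then Ĩ is a bi-ideal: Δ(Ĩ) ⊆ Ĩ⊗H + H⊗Ĩ and ε(Ĩ) = 0. -/

import Mathlib

noncomputable section

open TensorProduct

variable (k : Type*) [Field k]

def gF : FreeAlgebra k (Fin 3) := FreeAlgebra.ι k 0

def aF : FreeAlgebra k (Fin 3) := FreeAlgebra.ι k 1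

def bF : FreeAlgebra k (Fin 3) := FreeAlgebra.ι k 2

/-- Relations of the smash product `T(V) # kG`, where `V = span(a,b)` with
`a·g = a`, `b·g = a + b`: namely `g^n = 1`, `ag = ga`, `bg = ga + gb`. -/
def relH (n : ℕ) : FreeAlgebra k (Fin 3) → FreeAlgebra k (Fin 3) → Prop :=
  fun x y =>
    (x = (gF k) ^ n ∧ y = 1) ∨
    (x = aF k * gF k ∧ y = gF k * aF k) ∨
    (x = bF k * gF k ∧ y = gF k * aF k + gF k * bF k)

/-- The smash product algebra `H₀ = T(V) # kG`. -/
abbrev H (n : ℕ) := RingQuot (relH k n)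

def gH (n : ℕ) : H k n := RingQuot.mkAlgHom k (relH k n) (gF k)

def aH (n : ℕ) : H k n := RingQuot.mkAlgHom k (relH k n) (aF k)

def bH (n : ℕ) : H k n := RingQuot.mkAlgHom k (relH k n) (bF k)

set_option maxHeartbeats 1000000

section Aux
open Polynomial

variable {𝕜 : Type*} [Field 𝕜]


variable {𝕜 : Type*} [Field 𝕜]

-- (p-1 choose i : 𝕜) = (-1)^i
lemma choose_cast_eq (p : ℕ) [Fact p.Prime] [CharP 𝕜 p] :
    ∀ i : ℕ, i ≤ p - 1 → (((p-1).choose i : 𝕜)) = (-1)^i := by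
  have hp := (Fact.out : p.Prime)
  intro i
  induction i with
  | zero => simp
  | succ i ih =>
    intro hi
    have h1 : i ≤ p - 1 := le_of_lt (Nat.lt_of_lt_of_le (Nat.lt_succ_self i) hi)
    have hpc : (p.choose (i+1) : 𝕜) = 0 := by
      rw [CharP.cast_eq_zero_iff 𝕜 p]
      exact Nat.Prime.dvd_choose_self hp (Nat.succ_ne_zero i)
        (by omega)
    have hps : p - 1 + 1 = p := Nat.succ_pred_eq_of_pos hp.pos
    have := Nat.succ_sub_one p ▸ Nat.choose_succ_succ (p-1) i
    have h2 : p.choose (i+1) = (p-1).choose i + (p-1).choose (i+1) := by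
      rw [← hps]; exact Nat.choose_succ_succ _ _
    have h3 : ((p-1).choose i : 𝕜) + ((p-1).choose (i+1) : 𝕜) = 0 := by
      rw [← Nat.cast_add, ← h2, hpc]
    rw [ih h1] at h3
    rw [pow_succ]
    linear_combination h3




lemma derivative_pow_noncomm {R : Type*} [Ring R] (f : Polynomial R) (m : ℕ) :
    derivative (f ^ m) = ∑ i ∈ Finset.range m, f ^ i * derivative f * f ^ (m - 1 - i) := by
  induction m with
  | zero => simp
  | succ m ih =>
    rw [pow_succ, derivative_mul, ih, Finset.sum_mul, Finset.sum_range_succ]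
    congr 1
    · apply Finset.sum_congr rfl
      intro i hi
      have hi' := Finset.mem_range.mp hi
      have he : m - 1 - i + 1 = m + 1 - 1 - i := by omega
      rw [mul_assoc, mul_assoc, ← pow_succ, he, ← mul_assoc]
    · simp

lemma coeff_pow_zero_noncomm {R : Type*} [Ring R] (f : Polynomial R) (m : ℕ) :
    (f ^ m).coeff 0 = (f.coeff 0) ^ m := by
  induction m with
  | zero => simp
  | succ m ih => rw [pow_succ, mul_coeff_zero, ih, pow_succ]

lemma coeff_pow_self_noncomm {R : Type*} [Ring R] (f : Polynomial R) (h : f.natDegree ≤ 1) (m : ℕ) :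
    (f ^ m).coeff m = (f.coeff 1) ^ m := by
  induction m with
  | zero => simp
  | succ m ih =>
    rw [pow_succ, coeff_mul]
    rw [Finset.sum_eq_single (m, 1)]
    · rw [ih, pow_succ]
    · rintro ⟨i, j⟩ hij hne
      have hij' := Finset.HasAntidiagonal.mem_antidiagonal.mp hij
      simp only at hij'
      rcases Nat.lt_or_ge j 2 with hj | hj
      · have hj01 : j = 0 ∨ j = 1 := by omega
        rcases hj01 with rfl | rfl
        · have : i = m + 1 := by omega
          subst this
          have hdeg : (f ^ m).natDegree < m + 1 :=
            Nat.lt_succ_of_le (le_trans natDegree_pow_le (by simpa using Nat.mul_le_mul_left m h))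
          rw [coeff_eq_zero_of_natDegree_lt hdeg, zero_mul]
        · have : i = m := by omega
          exact absurd (by rw [this]) hne
      · rw [coeff_eq_zero_of_natDegree_lt (lt_of_le_of_lt h hj), mul_zero]
    · intro hnot
      exact absurd (Finset.HasAntidiagonal.mem_antidiagonal.mpr (by simp)) hnot

lemma crux {Q : Type*} [Ring Q] [Algebra 𝕜 Q]
    (p : ℕ) [Fact p.Prime] [CharP 𝕜 p] (hp : 2 < p)
    (u : Q) (W : ℕ → Q)
    (hw : ∀ m : ℕ, u * W m - W m * u = (1 + (m : 𝕜) * 2⁻¹) • W (m+1))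
    (hv : ∀ m : ℕ, W 0 * W m = W m * W 0) :
    (u + W 0) ^ p = u ^ p + (W 0) ^ p := by
  have hppos : 0 < p := by omega
  have hps : p - 1 + 1 = p := Nat.succ_pred_eq_of_pos hppos
  have h2k : (2 : 𝕜) ≠ 0 := by
    have : ¬ (p : ℕ) ∣ 2 := fun h => by have := Nat.le_of_dvd (by norm_num) h; omega
    intro h
    apply this
    rw [← CharP.cast_eq_zero_iff 𝕜 p 2]
    exact_mod_cast h
  set Z : Q[X] := C u + X * C (W 0) with hZdef
  have hdZ : derivative Z = C (W 0) := by
    rw [hZdef, derivative_add, derivative_C, derivative_mul, derivative_X, derivative_C,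
      one_mul, mul_zero, zero_add, add_zero]
  set L : Module.End 𝕜 Q[X] := LinearMap.mulLeft 𝕜 Z with hL
  set Rr : Module.End 𝕜 Q[X] := LinearMap.mulRight 𝕜 Z with hR
  set A : Module.End 𝕜 Q[X] := L - Rr with hA
  have hAap : ∀ y : Q[X], A y = Z * y - y * Z := by
    intro y
    simp [hA, hL, hR, LinearMap.sub_apply]
  have step : ∀ m : ℕ, A (C (W m)) = (1 + (m : 𝕜) * 2⁻¹) • C (W (m+1)) := by
    intro m
    rw [hAap]
    have e1 : Z * C (W m) - C (W m) * Z
        = C (u * W m - W m * u) + X * C (W 0 * W m - W m * W 0) := by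
      rw [hZdef, add_mul, mul_add, ← mul_assoc (C (W m)) X (C (W 0)), ← X_mul,
        map_sub, map_sub, map_mul, map_mul, map_mul, map_mul, mul_sub, mul_assoc, mul_assoc]
      abel
    rw [e1, hv m, sub_self, map_zero, mul_zero, add_zero, hw m, Polynomial.smul_C]
  have chain : ∀ r : ℕ, 1 ≤ r → ∃ c : 𝕜, (A ^ r) (C (W 0)) = c • C (W r) := by
    intro r
    induction r with
    | zero => omega
    | succ r ih =>
      intro _
      rcases Nat.eq_or_lt_of_le (Nat.one_le_iff_ne_zero.mpr (Nat.succ_ne_zero r)) with h1 | h1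
      · refine ⟨1 + (0 : 𝕜) * 2⁻¹, ?_⟩
        have : r = 0 := by omega
        subst this
        rw [pow_one]
        simpa using step 0
      · have hr : 1 ≤ r := by omega
        obtain ⟨c, hc⟩ := ih hr
        refine ⟨c * (1 + (r : 𝕜) * 2⁻¹), ?_⟩
        rw [pow_succ', Module.End.mul_apply, hc, map_smul, step r, smul_smul]
  have hA0 : (A ^ (p-1)) (C (W 0)) = 0 := by
    have hp2 : 1 ≤ p - 2 := by omega
    obtain ⟨c, hc⟩ := chain (p-2) hp2
    have hpp : p - 1 = (p - 2) + 1 := by omega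
    rw [hpp, pow_succ', Module.End.mul_apply, hc, map_smul, step (p-2)]
    have hcast : ((p - 2 : ℕ) : 𝕜) = -2 := by
      have : ((p - 2 : ℕ) : 𝕜) = (p : 𝕜) - 2 := by
        rw [Nat.cast_sub (by omega)]
        norm_num
      rw [this, CharP.cast_eq_zero 𝕜 p, zero_sub]
    rw [hcast]
    have : (1 : 𝕜) + -2 * 2⁻¹ = 0 := by
      field_simp; norm_num
    rw [this, zero_smul, smul_zero]
  have heven : Even (p - 1) := by
    have hodd : Odd p := (Fact.out : p.Prime).odd_of_ne_two (by omega)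
    exact Nat.Odd.sub_odd hodd (by norm_num)
  -- expansion of (L - Rr)^(p-1)
  have hopexp : A ^ (p - 1) = ∑ i ∈ Finset.range p, L ^ i * Rr ^ (p - 1 - i) := by
    have hcomm : Commute L (-Rr) := (LinearMap.commute_mulLeft_right (R := 𝕜) Z Z).neg_right
    have h1 : A = L + (-Rr) := by rw [hA, sub_eq_add_neg]
    rw [h1, hcomm.add_pow, hps]
    apply Finset.sum_congr rfl
    intro i hi
    have hile : i ≤ p - 1 := by have := Finset.mem_range.mp hi; omega
    have hneg1 : (-Rr) = (-1 : 𝕜) • Rr := by rw [neg_smul (1:𝕜) Rr, one_smul]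
    have hnegpow : (-Rr) ^ (p - 1 - i) = ((-1 : 𝕜) ^ (p - 1 - i)) • Rr ^ (p - 1 - i) := by
      rw [hneg1, _root_.smul_pow]
    have hcastc : (((p-1).choose i : ℕ) : Module.End 𝕜 Q[X])
        = algebraMap 𝕜 (Module.End 𝕜 Q[X]) ((-1 : 𝕜) ^ i) := by
      rw [← choose_cast_eq p i hile, map_natCast]
    rw [hnegpow, hcastc, Algebra.algebraMap_eq_smul_one]
    have hsc1 : (-1:𝕜)^(p-1-i) * (-1:𝕜)^i = 1 := by
      rw [← pow_add]
      have : p - 1 - i + i = p - 1 := by omega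
      rw [this]
      exact heven.neg_one_pow
    have hsc2 : (-1:𝕜)^i * (-1:𝕜)^(p-1-i) = 1 := by rw [mul_comm]; exact hsc1
    simp only [mul_smul_comm, smul_mul_assoc, mul_one, smul_smul, hsc1, hsc2, one_smul]
  have key : (A ^ (p-1)) (C (W 0))
      = ∑ i ∈ Finset.range p, Z ^ i * C (W 0) * Z ^ (p - 1 - i) := by
    rw [hopexp, LinearMap.sum_apply]
    apply Finset.sum_congr rfl
    intro i _
    rw [Module.End.mul_apply, hL, hR, LinearMap.pow_mulLeft, LinearMap.pow_mulRight,
      LinearMap.mulRight_apply, LinearMap.mulLeft_apply, mul_assoc]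
  have hder : derivative (Z ^ p) = 0 := by
    rw [derivative_pow_noncomm, hdZ, ← key, hA0]
  have hz0 : Z.coeff 0 = u := by
    rw [hZdef, coeff_add, coeff_C, if_pos rfl, X_mul, coeff_mul_X_zero, add_zero]
  have hz1 : Z.coeff 1 = W 0 := by
    rw [hZdef, coeff_add, coeff_C, if_neg one_ne_zero, X_mul]
    rw [show (1:ℕ) = 0 + 1 from rfl, coeff_mul_X, coeff_C_zero, zero_add]
  have hdeg : Z.natDegree ≤ 1 := by
    refine le_trans (natDegree_add_le _ _) (max_le (by simp) ?_)
    refine le_trans (natDegree_mul_le) ?_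
    simp [natDegree_X_le]
  have hFdeg : (Z ^ p).natDegree ≤ p := by
    refine le_trans natDegree_pow_le ?_
    calc p * Z.natDegree ≤ p * 1 := Nat.mul_le_mul_left p hdeg
    _ = p := mul_one p
  have hcoeff0 : (Z ^ p).coeff 0 = u ^ p := by rw [coeff_pow_zero_noncomm, hz0]
  have hcoeffp : (Z ^ p).coeff p = (W 0) ^ p := by rw [coeff_pow_self_noncomm Z hdeg, hz1]
  have hmid : ∀ i : ℕ, 0 < i → i < p → (Z ^ p).coeff i = 0 := by
    intro i hi0 hip
    have h1 : (derivative (Z ^ p)).coeff (i - 1) = 0 := by rw [hder, coeff_zero]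
    rw [coeff_derivative] at h1
    have hieq : i - 1 + 1 = i := by omega
    rw [hieq] at h1
    have hcast : ((i - 1 : ℕ) : Q) + 1 = algebraMap 𝕜 Q ((i : ℕ) : 𝕜) := by
      rw [map_natCast]
      have hc2 : ((i - 1 : ℕ) : Q) = (i : Q) - 1 := by
        have := Nat.cast_sub (show 1 ≤ i by omega) (R := Q)
        simpa using this
      rw [hc2, sub_add_cancel]
    rw [hcast] at h1
    have hki : ((i : ℕ) : 𝕜) ≠ 0 := by
      rw [Ne, CharP.cast_eq_zero_iff 𝕜 p]
      intro hdvd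
      have := Nat.le_of_dvd hi0 hdvd
      omega
    have h2 : (Z ^ p).coeff i * (algebraMap 𝕜 Q ((i : ℕ) : 𝕜)
        * algebraMap 𝕜 Q (((i : ℕ) : 𝕜)⁻¹)) = 0 := by
      rw [← mul_assoc, h1, zero_mul]
    rwa [← map_mul, mul_inv_cancel₀ hki, map_one, mul_one] at h2
  -- evaluation at 1
  have hone : ∀ a : Q, Commute ((RingHom.id Q) a) (1 : Q) := fun a => Commute.one_right _
  set φ : Q[X] →+* Q := eval₂RingHom' (RingHom.id Q) (1 : Q) hone with hφ
  have hφapply : ∀ f : Q[X], φ f = eval₂ (RingHom.id Q) (1 : Q) f := fun f => rfl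
  have hφZ : φ Z = u + W 0 := by
    rw [hZdef, map_add, hφapply, eval₂_C, map_mul, hφapply, hφapply, eval₂_X, eval₂_C]
    simp
  have hφF : φ (Z ^ p) = (u + W 0) ^ p := by rw [map_pow, hφZ]
  have hsum : φ (Z ^ p) = ∑ i ∈ Finset.range (p + 1), (Z ^ p).coeff i * 1 ^ i := by
    rw [hφapply, eval₂_eq_sum_range' (RingHom.id Q) (Nat.lt_succ_of_le hFdeg)]
    rfl
  rw [hsum] at hφF
  rw [Finset.sum_range_succ] at hφF
  have hrest : ∑ i ∈ Finset.range p, (Z ^ p).coeff i * 1 ^ i = u ^ p := by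
    rw [show Finset.range p = Finset.range (p - 1 + 1) from by rw [hps],
      Finset.sum_range_succ']
    have hz : ∀ i ∈ Finset.range (p - 1), (Z ^ p).coeff (i + 1) * 1 ^ (i + 1) = 0 := by
      intro i hi
      have := Finset.mem_range.mp hi
      rw [hmid (i+1) (by omega) (by omega), zero_mul]
    rw [Finset.sum_eq_zero hz, zero_add, hcoeff0, pow_zero, mul_one]
  rw [hrest, hcoeffp, one_pow, mul_one] at hφF
  exact hφF.symm



variable {A : Type*} [Ring A] [Algebra 𝕜 A]

/-- the generating set of `I ⊗ A + A ⊗ I` -/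
def genM (I : TwoSidedIdeal A) : Set (A ⊗[𝕜] A) :=
  {z | (∃ i ∈ I, ∃ h : A, z = i ⊗ₜ h) ∨ (∃ i ∈ I, ∃ h : A, z = h ⊗ₜ i)}

lemma genM_mul_right (I : TwoSidedIdeal A) (m : A ⊗[𝕜] A) (hm : m ∈ genM I) (z : A ⊗[𝕜] A) :
    m * z ∈ Submodule.span 𝕜 (genM (𝕜 := 𝕜) I) := by
  induction z using TensorProduct.induction_on with
  | zero => rw [mul_zero]; exact Submodule.zero_mem _
  | tmul x y =>
    rcases hm with ⟨i, hi, h, rfl⟩ | ⟨i, hi, h, rfl⟩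
    · rw [Algebra.TensorProduct.tmul_mul_tmul]
      exact Submodule.subset_span (Or.inl ⟨i * x, I.mul_mem_right i x hi, h * y, rfl⟩)
    · rw [Algebra.TensorProduct.tmul_mul_tmul]
      exact Submodule.subset_span (Or.inr ⟨i * y, I.mul_mem_right i y hi, h * x, rfl⟩)
  | add z₁ z₂ h₁ h₂ =>
    rw [mul_add]
    exact Submodule.add_mem _ h₁ h₂

lemma genM_mul_left (I : TwoSidedIdeal A) (m : A ⊗[𝕜] A) (hm : m ∈ genM I) (z : A ⊗[𝕜] A) :
    z * m ∈ Submodule.span 𝕜 (genM (𝕜 := 𝕜) I) := by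
  induction z using TensorProduct.induction_on with
  | zero => rw [zero_mul]; exact Submodule.zero_mem _
  | tmul x y =>
    rcases hm with ⟨i, hi, h, rfl⟩ | ⟨i, hi, h, rfl⟩
    · rw [Algebra.TensorProduct.tmul_mul_tmul]
      exact Submodule.subset_span (Or.inl ⟨x * i, I.mul_mem_left x i hi, y * h, rfl⟩)
    · rw [Algebra.TensorProduct.tmul_mul_tmul]
      exact Submodule.subset_span (Or.inr ⟨y * i, I.mul_mem_left y i hi, x * h, rfl⟩)
  | add z₁ z₂ h₁ h₂ =>
    rw [add_mul]
    exact Submodule.add_mem _ h₁ h₂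

lemma M_mul_right (I : TwoSidedIdeal A) (m : A ⊗[𝕜] A)
    (hm : m ∈ Submodule.span 𝕜 (genM (𝕜 := 𝕜) I)) (z : A ⊗[𝕜] A) :
    m * z ∈ Submodule.span 𝕜 (genM (𝕜 := 𝕜) I) := by
  induction hm using Submodule.span_induction with
  | mem m hmem => exact genM_mul_right I m hmem z
  | zero => rw [zero_mul]; exact Submodule.zero_mem _
  | add a b _ _ ha hb => rw [add_mul]; exact Submodule.add_mem _ ha hb
  | smul c a _ ha => rw [smul_mul_assoc]; exact Submodule.smul_mem _ c ha

lemma M_mul_left (I : TwoSidedIdeal A) (m : A ⊗[𝕜] A)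
    (hm : m ∈ Submodule.span 𝕜 (genM (𝕜 := 𝕜) I)) (z : A ⊗[𝕜] A) :
    z * m ∈ Submodule.span 𝕜 (genM (𝕜 := 𝕜) I) := by
  induction hm using Submodule.span_induction with
  | mem m hmem => exact genM_mul_left I m hmem z
  | zero => rw [mul_zero]; exact Submodule.zero_mem _
  | add a b _ _ ha hb => rw [mul_add]; exact Submodule.add_mem _ ha hb
  | smul c a _ ha => rw [mul_smul_comm]; exact Submodule.smul_mem _ c ha

/-- The span as a two-sided ideal. -/
def MIdeal (I : TwoSidedIdeal A) : TwoSidedIdeal (A ⊗[𝕜] A) :=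
  TwoSidedIdeal.mk' (Submodule.span 𝕜 (genM (𝕜 := 𝕜) I))
    (Submodule.zero_mem _)
    (fun ha hb => Submodule.add_mem _ ha hb)
    (fun ha => Submodule.neg_mem _ ha)
    (fun {x y} hy => M_mul_left I y hy x)
    (fun {x y} hx => M_mul_right I x hx y)

lemma mem_MIdeal (I : TwoSidedIdeal A) (x : A ⊗[𝕜] A) :
    x ∈ MIdeal (𝕜 := 𝕜) I ↔ x ∈ Submodule.span 𝕜 (genM (𝕜 := 𝕜) I) :=
  TwoSidedIdeal.mem_mk' _ _ _ _ _ _ x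

-- quotient
lemma MIdeal_ker (I : TwoSidedIdeal A) (x : A ⊗[𝕜] A) :
    (RingCon.mk' (MIdeal (𝕜 := 𝕜) I).ringCon x = 0)
      ↔ x ∈ Submodule.span 𝕜 (genM (𝕜 := 𝕜) I) := by
  constructor
  · intro h
    have h0 : (RingCon.mk' (MIdeal (𝕜 := 𝕜) I).ringCon) x
        = (RingCon.mk' (MIdeal (𝕜 := 𝕜) I).ringCon) 0 := by
      rw [h, map_zero]
    have := (RingCon.eq _).mp h0
    rw [TwoSidedIdeal.rel_iff, sub_zero, mem_MIdeal] at this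
    exact this
  · intro h
    have : (MIdeal (𝕜 := 𝕜) I).ringCon x 0 := by
      rw [TwoSidedIdeal.rel_iff, sub_zero, mem_MIdeal]
      exact h
    have h0 := (RingCon.eq _).mpr this
    exact h0



lemma add_pow_char_alg {R : Type*} [Ring R] [Algebra 𝕜 R]
    (p : ℕ) [Fact p.Prime] [CharP 𝕜 p] {x y : R} (h : Commute x y) :
    (x + y) ^ p = x ^ p + y ^ p := by
  have hp := (Fact.out : p.Prime)
  rw [h.add_pow]
  have hps : p - 1 + 1 = p := Nat.succ_pred_eq_of_pos hp.pos
  rw [Finset.sum_range_succ]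
  have hmid : ∀ i ∈ Finset.range p, i ≠ 0 →
      x ^ i * y ^ (p - i) * (p.choose i : R) = 0 := by
    intro i hi hi0
    have hiP := Finset.mem_range.mp hi
    have : (p.choose i : 𝕜) = 0 := by
      rw [CharP.cast_eq_zero_iff 𝕜 p]
      exact Nat.Prime.dvd_choose_self hp hi0 hiP
    have : (p.choose i : R) = 0 := by
      rw [← map_natCast (algebraMap 𝕜 R), this, map_zero]
    rw [this, mul_zero]
  have hsum : ∑ i ∈ Finset.range p, x ^ i * y ^ (p - i) * (p.choose i : R) = y ^ p := by
    rw [← hps, Finset.sum_range_succ']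
    have : ∀ i ∈ Finset.range (p-1),
        x ^ (i+1) * y ^ (p - (i+1)) * (p.choose (i+1) : R) = 0 := by
      intro i hi
      exact hmid (i+1) (Finset.mem_range.mpr (by have := Finset.mem_range.mp hi; omega))
        (Nat.succ_ne_zero i)
    simp only [hps]
    rw [Finset.sum_eq_zero this]
    simp
  rw [hsum]
  simp [Nat.sub_self, add_comm]

section QAux
variable {Q : Type*} [Ring Q] [Algebra 𝕜 Q]


lemma comm_pow_rel (s : 𝕜) (A1 B1 : Q)
    (hq : B1 * A1 = A1 * B1 + s • (A1 * A1)) :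
    ∀ m : ℕ, B1 * A1 ^ m = A1 ^ m * B1 + ((m : 𝕜) * s) • (A1 ^ (m+1)) := by
  intro m
  induction m with
  | zero => simp
  | succ m ih =>
    rw [pow_succ, ← mul_assoc, ih, add_mul, mul_assoc, hq]
    rw [mul_add, ← mul_assoc, ← pow_succ, mul_smul_comm, smul_mul_assoc]
    have e1 : A1 ^ m * (A1 * A1) = A1 ^ (m + 2) := by
      rw [← mul_assoc, ← pow_succ, ← pow_succ]
    have e2 : A1 ^ (m+1) * A1 = A1 ^ (m + 2) := (pow_succ _ _).symm
    rw [e1, e2, add_assoc, ← add_smul]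
    have : s + (m : 𝕜) * s = ((m + 1 : ℕ) : 𝕜) * s := by push_cast; ring
    rw [this]

lemma w_rel (s : 𝕜) (G1 A1 B1 B2 : Q)
    (hq : B1 * A1 = A1 * B1 + s • (A1 * A1))
    (hBG : B1 * G1 = G1 * A1 + G1 * B1)
    (cB2B1 : B2 * B1 = B1 * B2) :
    ∀ m : ℕ, B1 * (G1 * A1 ^ m * B2) - (G1 * A1 ^ m * B2) * B1
      = (1 + (m : 𝕜) * s) • (G1 * A1 ^ (m+1) * B2) := by
  intro m
  have h1 : B1 * (G1 * A1 ^ m * B2) = ((B1 * G1) * A1 ^ m) * B2 := by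
    rw [← mul_assoc, ← mul_assoc]
  have h2 : (G1 * A1 ^ m * B2) * B1 = (G1 * A1 ^ m) * (B1 * B2) := by
    rw [mul_assoc, cB2B1]
  rw [h1, h2, hBG, add_mul, add_mul, mul_assoc G1 (B1) (A1 ^ m), comm_pow_rel s A1 B1 hq m]
  rw [mul_add, add_mul]
  have e1 : G1 * A1 * A1 ^ m * B2 = G1 * A1 ^ (m+1) * B2 := by
    rw [mul_assoc G1 A1 (A1 ^ m), ← pow_succ']
  have e2 : G1 * (A1 ^ m * B1) * B2 = G1 * A1 ^ m * (B1 * B2) := by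
    rw [← mul_assoc, mul_assoc]
  have e3 : G1 * ((m : 𝕜) * s) • A1 ^ (m+1) * B2 = ((m : 𝕜) * s) • (G1 * A1 ^ (m+1) * B2) := by
    rw [mul_smul_comm, smul_mul_assoc]
  rw [e1, e2, e3, add_smul, one_smul]
  abel



lemma quad_identity (s : 𝕜) (hs : s + s = 1) (G1 A1 B1 A2 B2 : Q)
    (hAG : A1 * G1 = G1 * A1)
    (hBG : B1 * G1 = G1 * A1 + G1 * B1)
    (hq1 : B1 * A1 = A1 * B1 + s • (A1 * A1))
    (hq2 : B2 * A2 = A2 * B2 + s • (A2 * A2))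
    (cA2A1 : A2 * A1 = A1 * A2)
    (cA2G1 : A2 * G1 = G1 * A2)
    (cB2A1 : B2 * A1 = A1 * B2)
    (cB2G1 : B2 * G1 = G1 * B2)
    (cA2B1 : A2 * B1 = B1 * A2) :
    (B1 + G1 * B2) * (A1 + G1 * A2) - (A1 + G1 * A2) * (B1 + G1 * B2)
      - s • ((A1 + G1 * A2) * (A1 + G1 * A2)) = 0 := by
  have p2 : B1 * (G1 * A2) = G1 * (A1 * A2) + G1 * (B1 * A2) := by
    rw [← mul_assoc, hBG, add_mul, mul_assoc, mul_assoc]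
  have p3 : (G1 * B2) * A1 = G1 * (A1 * B2) := by rw [mul_assoc, cB2A1]
  have p4 : (G1 * B2) * (G1 * A2) = G1 * (G1 * (A2 * B2)) + s • (G1 * (G1 * (A2 * A2))) := by
    rw [mul_assoc, ← mul_assoc B2 G1 A2, cB2G1, mul_assoc, hq2, mul_add, mul_add,
      mul_smul_comm, mul_smul_comm]
  have p5 : A1 * (G1 * B2) = G1 * (A1 * B2) := by rw [← mul_assoc, hAG, mul_assoc]
  have p6 : (G1 * A2) * B1 = G1 * (B1 * A2) := by rw [mul_assoc, cA2B1]
  have p7 : (G1 * A2) * (G1 * B2) = G1 * (G1 * (A2 * B2)) := by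
    rw [mul_assoc, ← mul_assoc A2 G1 B2, cA2G1, mul_assoc]
  have p8 : A1 * (G1 * A2) = G1 * (A1 * A2) := by rw [← mul_assoc, hAG, mul_assoc]
  have p9 : (G1 * A2) * A1 = G1 * (A1 * A2) := by rw [mul_assoc, cA2A1]
  have p10 : (G1 * A2) * (G1 * A2) = G1 * (G1 * (A2 * A2)) := by
    rw [mul_assoc, ← mul_assoc A2 G1 A2, cA2G1, mul_assoc]
  rw [mul_add, add_mul, add_mul, mul_add, add_mul, add_mul, mul_add, add_mul, add_mul]
  rw [hq1, p2, p3, p4, p5, p6, p7, p8, p9, p10, smul_add, smul_add, smul_add]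
  have hcol : G1 * (A1 * A2) - (s • (G1 * (A1 * A2)) + s • (G1 * (A1 * A2))) = 0 := by
    rw [← add_smul, hs, one_smul, sub_self]
  calc _ = G1 * (A1 * A2) - (s • (G1 * (A1 * A2)) + s • (G1 * (A1 * A2))) := by abel
    _ = 0 := hcol

end QAux

def piQ (I : TwoSidedIdeal A) : (A ⊗[𝕜] A) →ₐ[𝕜] (MIdeal (𝕜 := 𝕜) I).ringCon.Quotient :=
  AlgHom.mk' ((MIdeal (𝕜 := 𝕜) I).ringCon.mk') (fun c x => rfl)

lemma piQ_eq_zero_iff (I : TwoSidedIdeal A) (x : A ⊗[𝕜] A) :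
    piQ (𝕜 := 𝕜) I x = 0 ↔ x ∈ Submodule.span 𝕜 (genM (𝕜 := 𝕜) I) :=
  MIdeal_ker I x

lemma piQ_tmul_zero_left (I : TwoSidedIdeal A) {i : A} (hi : i ∈ I) (h : A) :
    piQ (𝕜 := 𝕜) I (i ⊗ₜ h) = 0 :=
  (piQ_eq_zero_iff I _).mpr (Submodule.subset_span (Or.inl ⟨i, hi, h, rfl⟩))

lemma piQ_tmul_zero_right (I : TwoSidedIdeal A) {i : A} (hi : i ∈ I) (h : A) :
    piQ (𝕜 := 𝕜) I (h ⊗ₜ i) = 0 :=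
  (piQ_eq_zero_iff I _).mpr (Submodule.subset_span (Or.inr ⟨i, hi, h, rfl⟩))

end Aux

lemma rel_ag (n : ℕ) : aH k n * gH k n = gH k n * aH k n := by
  simp only [aH, gH, ← map_mul]
  exact RingQuot.mkAlgHom_rel k (Or.inr (Or.inl ⟨rfl, rfl⟩))

lemma rel_bg (n : ℕ) : bH k n * gH k n = gH k n * aH k n + gH k n * bH k n := by
  simp only [bH, gH, aH, ← map_mul, ← map_add]
  exact RingQuot.mkAlgHom_rel k (Or.inr (Or.inr ⟨rfl, rfl⟩))

section MasterSec

variable {k}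

/-- The generating set of the ideal `Ĩ`. -/
abbrev Sgen (p n : ℕ) (lam mu : k) : Set (H k n) :=
  {(aH k n) ^ p - lam • (1 - (gH k n) ^ p),
   (bH k n) ^ p - mu • (1 - (gH k n) ^ p),
   bH k n * aH k n - aH k n * bH k n - ((2 : k)⁻¹) • (aH k n) ^ 2}

lemma master (p n : ℕ) [Fact p.Prime] (hp : 2 < p) [CharP k p]
    (lam mu : k)
    (Δ : H k n →ₐ[k] H k n ⊗[k] H k n)
    (hg : Δ (gH k n) = gH k n ⊗ₜ gH k n)
    (ha : Δ (aH k n) = aH k n ⊗ₜ 1 + gH k n ⊗ₜ aH k n)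
    (hb : Δ (bH k n) = bH k n ⊗ₜ 1 + gH k n ⊗ₜ bH k n)
    (ε : H k n →ₐ[k] k)
    (heg : ε (gH k n) = 1) (hea : ε (aH k n) = 0) (heb : ε (bH k n) = 0) :
    ∀ x ∈ TwoSidedIdeal.span (Sgen p n lam mu),
      Δ x ∈ Submodule.span k (genM (𝕜 := k) (TwoSidedIdeal.span (Sgen p n lam mu)))
        ∧ ε x = 0 := by
  have hp0 : p ≠ 0 := by omega
  have h2k : (2 : k) ≠ 0 := by
    have hnd : ¬ (p : ℕ) ∣ 2 := fun hdvd => by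
      have := Nat.le_of_dvd (by norm_num) hdvd; omega
    intro hc
    apply hnd
    rw [← CharP.cast_eq_zero_iff k p 2]
    exact_mod_cast hc
  have hs2 : (2 : k)⁻¹ + (2 : k)⁻¹ = 1 := by
    rw [← two_mul, mul_inv_cancel₀ h2k]
  set g' := gH k n with hgdef
  set a' := aH k n with hadef
  set b' := bH k n with hbdef
  set I : TwoSidedIdeal (H k n) := TwoSidedIdeal.span (Sgen p n lam mu) with hIdef
  set M : Submodule k (H k n ⊗[k] H k n) := Submodule.span k (genM (𝕜 := k) I) with hMdef
  have hge1 : a' ^ p - lam • (1 - g' ^ p) ∈ I :=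
    TwoSidedIdeal.subset_span (by rw [hgdef, hadef]; left; rfl)
  have hge2 : b' ^ p - mu • (1 - g' ^ p) ∈ I :=
    TwoSidedIdeal.subset_span (by rw [hgdef, hbdef]; right; left; rfl)
  have hge3 : b' * a' - a' * b' - (2 : k)⁻¹ • a' ^ 2 ∈ I :=
    TwoSidedIdeal.subset_span (by rw [hadef, hbdef]; right; right; rfl)
  set π := piQ (𝕜 := k) I with hπdef
  have tm : ∀ x y z w : H k n, (x ⊗ₜ[k] y) * (z ⊗ₜ[k] w) = (x * z) ⊗ₜ[k] (y * w) := by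
    intro x y z w; rw [Algebra.TensorProduct.tmul_mul_tmul]
  have hmul1 : ∀ x y : H k n, π (x ⊗ₜ 1) * π (y ⊗ₜ 1) = π ((x * y) ⊗ₜ 1) := by
    intro x y; rw [← map_mul, tm, mul_one]
  have hmul2 : ∀ x y : H k n, π (1 ⊗ₜ x) * π (1 ⊗ₜ y) = π (1 ⊗ₜ (x * y)) := by
    intro x y; rw [← map_mul, tm, mul_one]
  have hone : π ((1 : H k n) ⊗ₜ 1) = 1 := by
    rw [← Algebra.TensorProduct.one_def, map_one]
  have hpow1 : ∀ (x : H k n) (m : ℕ), π (x ⊗ₜ 1) ^ m = π ((x ^ m) ⊗ₜ 1) := by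
    intro x m; rw [← map_pow, Algebra.TensorProduct.tmul_pow, one_pow]
  have hpow2 : ∀ (x : H k n) (m : ℕ), π (1 ⊗ₜ x) ^ m = π (1 ⊗ₜ (x ^ m)) := by
    intro x m; rw [← map_pow, Algebra.TensorProduct.tmul_pow, one_pow]
  have hsplit : ∀ x y : H k n, π (x ⊗ₜ y) = π (x ⊗ₜ 1) * π (1 ⊗ₜ y) := by
    intro x y; rw [← map_mul, tm, mul_one, one_mul]
  have hcross : ∀ x y : H k n, π (1 ⊗ₜ y) * π (x ⊗ₜ 1) = π (x ⊗ₜ 1) * π (1 ⊗ₜ y) := by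
    intro x y; rw [← map_mul, ← map_mul, tm, tm, mul_one, one_mul, mul_one, one_mul]
  have comm_cross : ∀ x y : H k n, Commute (π (x ⊗ₜ 1)) (π (1 ⊗ₜ y)) :=
    fun x y => (hcross x y).symm
  have rag : a' * g' = g' * a' := rel_ag k n
  have rbg : b' * g' = g' * a' + g' * b' := rel_bg k n
  have cAG : π (a' ⊗ₜ 1) * π (g' ⊗ₜ 1) = π (g' ⊗ₜ 1) * π (a' ⊗ₜ 1) := by
    rw [hmul1, hmul1, rag]
  have cBG : π (b' ⊗ₜ 1) * π (g' ⊗ₜ 1)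
      = π (g' ⊗ₜ 1) * π (a' ⊗ₜ 1) + π (g' ⊗ₜ 1) * π (b' ⊗ₜ 1) := by
    rw [hmul1, hmul1, hmul1, rbg, TensorProduct.add_tmul, map_add]
  have cq1 : π (b' ⊗ₜ 1) * π (a' ⊗ₜ 1)
      = π (a' ⊗ₜ 1) * π (b' ⊗ₜ 1) + (2 : k)⁻¹ • (π (a' ⊗ₜ 1) * π (a' ⊗ₜ 1)) := by
    have h0 := piQ_tmul_zero_left (𝕜 := k) I hge3 1
    rw [TensorProduct.sub_tmul, TensorProduct.sub_tmul, ← smul_tmul', map_sub, map_sub,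
      map_smul, pow_two] at h0
    rw [← hmul1 b' a', ← hmul1 a' b', ← hmul1 a' a'] at h0
    rw [sub_sub, sub_eq_zero] at h0
    exact h0
  have cq2 : π (1 ⊗ₜ b') * π (1 ⊗ₜ a')
      = π (1 ⊗ₜ a') * π (1 ⊗ₜ b') + (2 : k)⁻¹ • (π (1 ⊗ₜ a') * π (1 ⊗ₜ a')) := by
    have h0 := piQ_tmul_zero_right (𝕜 := k) I hge3 1
    rw [TensorProduct.tmul_sub, TensorProduct.tmul_sub, tmul_smul, map_sub, map_sub,
      map_smul, pow_two] at h0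
    rw [← hmul2 b' a', ← hmul2 a' b', ← hmul2 a' a'] at h0
    rw [sub_sub, sub_eq_zero] at h0
    exact h0
  have hAp1 : π (a' ⊗ₜ 1) ^ p = lam • (1 - π (g' ⊗ₜ 1) ^ p) := by
    have h0 := piQ_tmul_zero_left (𝕜 := k) I hge1 1
    rw [TensorProduct.sub_tmul, ← smul_tmul', TensorProduct.sub_tmul, map_sub, map_smul,
      map_sub, hone] at h0
    rw [← hpow1 a' p, ← hpow1 g' p] at h0
    rw [sub_eq_zero] at h0
    exact h0
  have hAp2 : π (1 ⊗ₜ a') ^ p = lam • (1 - π (1 ⊗ₜ g') ^ p) := by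
    have h0 := piQ_tmul_zero_right (𝕜 := k) I hge1 1
    rw [TensorProduct.tmul_sub, tmul_smul, TensorProduct.tmul_sub, map_sub, map_smul,
      map_sub, hone] at h0
    rw [← hpow2 a' p, ← hpow2 g' p] at h0
    rw [sub_eq_zero] at h0
    exact h0
  have hBp1 : π (b' ⊗ₜ 1) ^ p = mu • (1 - π (g' ⊗ₜ 1) ^ p) := by
    have h0 := piQ_tmul_zero_left (𝕜 := k) I hge2 1
    rw [TensorProduct.sub_tmul, ← smul_tmul', TensorProduct.sub_tmul, map_sub, map_smul,
      map_sub, hone] at h0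
    rw [← hpow1 b' p, ← hpow1 g' p] at h0
    rw [sub_eq_zero] at h0
    exact h0
  have hBp2 : π (1 ⊗ₜ b') ^ p = mu • (1 - π (1 ⊗ₜ g') ^ p) := by
    have h0 := piQ_tmul_zero_right (𝕜 := k) I hge2 1
    rw [TensorProduct.tmul_sub, tmul_smul, TensorProduct.tmul_sub, map_sub, map_smul,
      map_sub, hone] at h0
    rw [← hpow2 b' p, ← hpow2 g' p] at h0
    rw [sub_eq_zero] at h0
    exact h0
  -- the three Δ-memberships
  have key1 : Δ (a' ^ p - lam • (1 - g' ^ p)) ∈ M := by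
    rw [hMdef]
    refine (piQ_eq_zero_iff (𝕜 := k) I _).mp ?_
    have hΔ : Δ (a' ^ p - lam • (1 - g' ^ p))
        = (a' ⊗ₜ 1 + g' ⊗ₜ a') ^ p - lam • (1 - (g' ⊗ₜ g') ^ p) := by
      rw [map_sub, map_pow, ha, map_smul, map_sub, map_one, map_pow, hg]
    rw [hΔ, map_sub, map_pow, map_add, map_smul, map_sub, map_one, map_pow,
      hsplit g' a', hsplit g' g']
    have cmAG : Commute (π (a' ⊗ₜ 1)) (π (g' ⊗ₜ 1)) := cAG
    have hAcomm : Commute (π (a' ⊗ₜ 1)) (π (g' ⊗ₜ 1) * π (1 ⊗ₜ a')) :=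
      cmAG.mul_right (comm_cross a' a')
    rw [add_pow_char_alg (𝕜 := k) p hAcomm, (comm_cross g' a').mul_pow,
      (comm_cross g' g').mul_pow,
      hAp1, hAp2, mul_smul_comm, ← smul_add, ← smul_sub]
    have hz : (1 - π (g' ⊗ₜ 1) ^ p) + π (g' ⊗ₜ 1) ^ p * (1 - π (1 ⊗ₜ g') ^ p)
        - (1 - π (g' ⊗ₜ 1) ^ p * π (1 ⊗ₜ g') ^ p) = 0 := by noncomm_ring
    rw [hz, smul_zero]
  have key2 : Δ (b' ^ p - mu • (1 - g' ^ p)) ∈ M := by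
    rw [hMdef]
    refine (piQ_eq_zero_iff (𝕜 := k) I _).mp ?_
    have hΔ : Δ (b' ^ p - mu • (1 - g' ^ p))
        = (b' ⊗ₜ 1 + g' ⊗ₜ b') ^ p - mu • (1 - (g' ⊗ₜ g') ^ p) := by
      rw [map_sub, map_pow, hb, map_smul, map_sub, map_one, map_pow, hg]
    rw [hΔ, map_sub, map_pow, map_add, map_smul, map_sub, map_one, map_pow,
      hsplit g' b', hsplit g' g']
    set W : ℕ → _ := fun m => π (g' ⊗ₜ 1) * π (a' ⊗ₜ 1) ^ m * π (1 ⊗ₜ b') with hWdef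
    have hW0 : W 0 = π (g' ⊗ₜ 1) * π (1 ⊗ₜ b') := by
      rw [hWdef]; simp only [pow_zero, mul_one]
    have hww : ∀ m : ℕ, π (b' ⊗ₜ 1) * W m - W m * π (b' ⊗ₜ 1)
        = (1 + (m : k) * (2 : k)⁻¹) • W (m + 1) := by
      intro m
      exact w_rel (2 : k)⁻¹ _ _ _ _ cq1 cBG (hcross b' b') m
    have hvv : ∀ m : ℕ, W 0 * W m = W m * W 0 := by
      intro m
      have cmAG : Commute (π (a' ⊗ₜ 1)) (π (g' ⊗ₜ 1)) := cAG
      have cGA : Commute (π (g' ⊗ₜ 1)) (π (a' ⊗ₜ 1)) := cmAG.symm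
      have cGB : Commute (π (g' ⊗ₜ 1)) (π (1 ⊗ₜ b')) := comm_cross g' b'
      have cAB : Commute (π (a' ⊗ₜ 1)) (π (1 ⊗ₜ b')) := comm_cross a' b'
      have c_g : Commute (π (g' ⊗ₜ 1)) (π (g' ⊗ₜ 1) * π (a' ⊗ₜ 1) ^ m * π (1 ⊗ₜ b')) :=
        (((Commute.refl _).mul_right (cGA.pow_right m)).mul_right cGB)
      have c_a : Commute (π (a' ⊗ₜ 1) ^ 0) (π (g' ⊗ₜ 1) * π (a' ⊗ₜ 1) ^ m * π (1 ⊗ₜ b')) :=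
        (((cGA.symm.pow_left 0).mul_right ((Commute.refl _).pow_pow 0 m)).mul_right
          (cAB.pow_left 0))
      have c_b : Commute (π (1 ⊗ₜ b')) (π (g' ⊗ₜ 1) * π (a' ⊗ₜ 1) ^ m * π (1 ⊗ₜ b')) :=
        (((cGB.symm.mul_right (cAB.symm.pow_right m))).mul_right (Commute.refl _))
      exact ((c_g.mul_left c_a).mul_left c_b : Commute (W 0) (W m))
    have hcrux := crux p hp (π (b' ⊗ₜ 1)) W hww hvv
    rw [hW0] at hcrux
    rw [hcrux, hBp1, (comm_cross g' b').mul_pow, (comm_cross g' g').mul_pow,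
      hBp2, mul_smul_comm, ← smul_add, ← smul_sub]
    have hz : (1 - π (g' ⊗ₜ 1) ^ p) + π (g' ⊗ₜ 1) ^ p * (1 - π (1 ⊗ₜ g') ^ p)
        - (1 - π (g' ⊗ₜ 1) ^ p * π (1 ⊗ₜ g') ^ p) = 0 := by noncomm_ring
    rw [hz, smul_zero]
  have key3 : Δ (b' * a' - a' * b' - (2 : k)⁻¹ • a' ^ 2) ∈ M := by
    rw [hMdef]
    refine (piQ_eq_zero_iff (𝕜 := k) I _).mp ?_
    have hΔ : Δ (b' * a' - a' * b' - (2 : k)⁻¹ • a' ^ 2)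
        = Δ b' * Δ a' - Δ a' * Δ b' - (2 : k)⁻¹ • (Δ a' * Δ a') := by
      rw [map_sub, map_sub, map_mul, map_mul, map_smul, map_pow, pow_two]
    rw [hΔ, ha, hb, map_sub, map_sub, map_mul, map_mul, map_smul, map_mul,
      map_add, map_add, hsplit g' a', hsplit g' b']
    exact quad_identity (2 : k)⁻¹ hs2 _ _ _ _ _ cAG cBG cq1 cq2
      (hcross a' a') (hcross g' a') (hcross a' b') (hcross g' b') (hcross b' a')
  -- ε vanishing
  have eps1 : ε (a' ^ p - lam • (1 - g' ^ p)) = 0 := by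
    rw [map_sub, map_pow, hea, map_smul, map_sub, map_one, map_pow, heg, one_pow]
    simp [hp0]
  have eps2 : ε (b' ^ p - mu • (1 - g' ^ p)) = 0 := by
    rw [map_sub, map_pow, heb, map_smul, map_sub, map_one, map_pow, heg, one_pow]
    simp [hp0]
  have eps3 : ε (b' * a' - a' * b' - (2 : k)⁻¹ • a' ^ 2) = 0 := by
    rw [map_sub, map_sub, map_mul, map_mul, map_smul, map_pow, hea, heb]
    simp
  -- assemble via the two-sided ideal T
  intro x hx
  let T : TwoSidedIdeal (H k n) := TwoSidedIdeal.mk' {y | Δ y ∈ M ∧ ε y = 0}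
    (⟨by rw [map_zero]; exact M.zero_mem, by rw [map_zero]⟩)
    (fun {u v} hu hv => ⟨by rw [map_add]; exact M.add_mem hu.1 hv.1,
      by rw [map_add, hu.2, hv.2, add_zero]⟩)
    (fun {u} hu => ⟨by rw [map_neg, ← neg_one_smul k (Δ u)]; exact M.smul_mem _ hu.1, by rw [map_neg, hu.2, neg_zero]⟩)
    (fun {u v} hv => ⟨by rw [map_mul]; exact M_mul_left I _ hv.1 _,
      by rw [map_mul, hv.2, mul_zero]⟩)
    (fun {u v} hu => ⟨by rw [map_mul]; exact M_mul_right I _ hu.1 _,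
      by rw [map_mul, hu.2, zero_mul]⟩)
  have hsub : Sgen (k := k) p n lam mu ⊆ (T : Set (H k n)) := by
    intro y hy
    rcases hy with hy | hy | hy
    · have : y = a' ^ p - lam • (1 - g' ^ p) := by rw [hy, hadef, hgdef]
      subst this
      exact (TwoSidedIdeal.mem_mk' {y | Δ y ∈ M ∧ ε y = 0} _ _ _ _ _ _).mpr ⟨key1, eps1⟩
    · have : y = b' ^ p - mu • (1 - g' ^ p) := by rw [hy, hbdef, hgdef]
      subst this
      exact (TwoSidedIdeal.mem_mk' {y | Δ y ∈ M ∧ ε y = 0} _ _ _ _ _ _).mpr ⟨key2, eps2⟩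
    · have : y = b' * a' - a' * b' - (2 : k)⁻¹ • a' ^ 2 := by rw [hy, hadef, hbdef]
      subst this
      exact (TwoSidedIdeal.mem_mk' {y | Δ y ∈ M ∧ ε y = 0} _ _ _ _ _ _).mpr ⟨key3, eps3⟩
  have hxT : x ∈ T := TwoSidedIdeal.mem_span_iff.mp hx T hsub
  exact (TwoSidedIdeal.mem_mk' {y | Δ y ∈ M ∧ ε y = 0} _ _ _ _ _ x).mp hxT


end MasterSec

theorem lifting_ideal_is_biideal (p n : ℕ) [Fact p.Prime] (hp : 2 < p) [CharP k p]
    (hn : 0 < n) (hpn : p ∣ n) (lam mu : k)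
    (Δ : H k n →ₐ[k] H k n ⊗[k] H k n)
    (hg : Δ (gH k n) = gH k n ⊗ₜ gH k n)
    (ha : Δ (aH k n) = aH k n ⊗ₜ 1 + gH k n ⊗ₜ aH k n)
    (hb : Δ (bH k n) = bH k n ⊗ₜ 1 + gH k n ⊗ₜ bH k n)
    (ε : H k n →ₐ[k] k)
    (heg : ε (gH k n) = 1) (hea : ε (aH k n) = 0) (heb : ε (bH k n) = 0) :
    ∀ x ∈ TwoSidedIdeal.span
        ({(aH k n) ^ p - lam • (1 - (gH k n) ^ p),
          (bH k n) ^ p - mu • (1 - (gH k n) ^ p),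
          bH k n * aH k n - aH k n * bH k n - ((2 : k)⁻¹) • (aH k n) ^ 2} :
          Set (H k n)),
      -- Δ(Ĩ) ⊆ Ĩ ⊗ H + H ⊗ Ĩ
      Δ x ∈ Submodule.span k
        {z : H k n ⊗[k] H k n |
          (∃ i ∈ TwoSidedIdeal.span
              ({(aH k n) ^ p - lam • (1 - (gH k n) ^ p),
                (bH k n) ^ p - mu • (1 - (gH k n) ^ p),
                bH k n * aH k n - aH k n * bH k n - ((2 : k)⁻¹) • (aH k n) ^ 2} :
                Set (H k n)), ∃ h : H k n, z = i ⊗ₜ h) ∨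
          (∃ i ∈ TwoSidedIdeal.span
              ({(aH k n) ^ p - lam • (1 - (gH k n) ^ p),
                (bH k n) ^ p - mu • (1 - (gH k n) ^ p),
                bH k n * aH k n - aH k n * bH k n - ((2 : k)⁻¹) • (aH k n) ^ 2} :
                Set (H k n)), ∃ h : H k n, z = h ⊗ₜ i)} ∧
      -- ε(Ĩ) = 0
      ε x = 0 := by
  intro x hx
  exact master p n hp lam mu Δ hg ha hb ε heg hea heb x hx
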